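/- Let n ≥ 1, let 0 ≤ k ≤ n, and let L be a real symmetric n×n matrix with no zero eigenvalue, with eigenvalues χ₁ ≤ … ≤ χ_r < 0 < χ_{r+1} ≤ … ≤ χ_n listed with multiplicity. For J ⊆ {1,…,n} with |J| = k and α ∈ ℕⁿ set γ_{J,α} := Σ_{j∈J, j>r} |χ_j| + Σ_{j∉J, j≤r} |χ_j| + Σ_{j=1}^{n} α_j |χ_j|. Then for every z ∈ ℂ the family ( e^{−(z+γ_{J,α})} ) indexed by pairs (J,α) with |J| = k, α ∈ ℕⁿ, is summable, the infinite product F(z) := Π_{(J,α)} ( 1 − e^{−(z+γ_{J,α})} ) converges (the family is multipliable), and the resulting function F is analytic on all of ℂ. -/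

import Mathlib

set_option maxHeartbeats 1000000


open Polynomial

/-- Summability of `q ^ (α 1 + ⋯ + α N)` over multi-indices `α`, for `0 ≤ q < 1`. -/
lemma summable_pow_sum_pi {q : ℝ} (h0 : 0 ≤ q) (h1 : q < 1) (N : ℕ) :
    Summable (fun α : Fin N → ℕ => q ^ ∑ j, α j) := by
  induction N with
  | zero => exact Summable.of_finite
  | succ N ih =>
    have h := (summable_geometric_of_lt_one h0 h1).mul_of_nonneg ih
      (fun _ => pow_nonneg h0 _) (fun _ => pow_nonneg h0 _)
    rw [← (Fin.consEquiv (fun _ : Fin (N + 1) => ℕ)).summable_iff]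
    refine h.congr fun x => ?_
    simp only [Function.comp_apply, Fin.consEquiv_apply, Fin.sum_cons, pow_add]

/-- The main analytic fact: if `e^{-γ p}` is summable then for all `z` the family
`e^{-(z+γ p)}` is summable, `1 - e^{-(z+γ p)}` is multipliable, and the product is
entire. -/
theorem ruelle_aux {ι : Type*} (γ : ι → ℝ)
    (Ssum : Summable fun p : ι => Real.exp (-γ p)) :
    (∀ z : ℂ, Summable (fun p : ι => Complex.exp (-(z + (γ p : ℂ)))) ∧
      Multipliable (fun p : ι => 1 - Complex.exp (-(z + (γ p : ℂ))))) ∧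
    ∀ z : ℂ, AnalyticAt ℂ
      (fun w : ℂ => ∏' p : ι, (1 - Complex.exp (-(w + (γ p : ℂ))))) z := by
  classical
  have hnorm : ∀ (w : ℂ) (p : ι),
      ‖Complex.exp (-(w + (γ p : ℂ)))‖ = Real.exp (-(w.re + γ p)) := by
    intro w p
    rw [Complex.norm_exp, Real.exp_eq_exp]
    simp
  have hfin : ∀ C : ℝ, {p : ι | γ p ≤ C}.Finite := by
    intro C
    have h := Ssum.tendsto_cofinite_zero.eventually_lt_const (Real.exp_pos (-C))
    refine (Filter.eventually_cofinite.mp h).subset fun p hp => ?_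
    simp only [Set.mem_setOf_eq, not_lt] at *
    exact Real.exp_le_exp.mpr (neg_le_neg hp)
  have main : ∀ t : ℝ, ∃ s : Set ι, s.Finite ∧
      (∀ w : ℂ, t ≤ w.re →
        HasProd (fun p : ↥sᶜ => 1 - Complex.exp (-(w + (γ p.1 : ℂ))))
          (Complex.exp (∑' p : ↥sᶜ,
            Complex.log (1 - Complex.exp (-(w + (γ p.1 : ℂ))))))) ∧
      DifferentiableOn ℂ
        (fun w : ℂ => ∑' p : ↥sᶜ, Complex.log (1 - Complex.exp (-(w + (γ p.1 : ℂ)))))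
        {w : ℂ | t < w.re} := by
    intro t
    set s : Set ι := {p : ι | γ p < -t + Real.log 2} with hs
    have hsfin : s.Finite := (hfin (-t + Real.log 2)).subset fun p hp => show γ p ≤ _ from le_of_lt hp
    have hb : ∀ (p : ↥sᶜ) (w : ℂ), t ≤ w.re →
        ‖Complex.exp (-(w + (γ p.1 : ℂ)))‖ ≤ Real.exp (-(t + γ p.1)) ∧
        Real.exp (-(t + γ p.1)) ≤ 1 / 2 := by
      intro p w hw
      have hp : -t + Real.log 2 ≤ γ p.1 := by
        have := p.2
        simp only [Set.mem_compl_iff, hs, Set.mem_setOf_eq, not_lt] at this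
        exact this
      constructor
      · rw [hnorm]
        exact Real.exp_le_exp.mpr (by linarith)
      · calc Real.exp (-(t + γ p.1)) ≤ Real.exp (-Real.log 2) :=
            Real.exp_le_exp.mpr (by linarith)
          _ = 1 / 2 := by rw [Real.exp_neg, Real.exp_log two_pos]; norm_num
    have hlogsum : Summable (fun p : ↥sᶜ => (3 / 2 : ℝ) * Real.exp (-(t + γ p.1))) := by
      have h := (Ssum.subtype sᶜ).mul_left (Real.exp (-t))
      refine (h.mul_left (3 / 2)).congr fun p => ?_
      simp only [Function.comp_apply, ← Real.exp_add]
      ring_nf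
    have hlogbound : ∀ (p : ↥sᶜ) (w : ℂ), t ≤ w.re →
        ‖Complex.log (1 - Complex.exp (-(w + (γ p.1 : ℂ))))‖ ≤
          3 / 2 * Real.exp (-(t + γ p.1)) := by
      intro p w hw
      obtain ⟨h1, h2⟩ := hb p w hw
      have hhalf : ‖-Complex.exp (-(w + (γ p.1 : ℂ)))‖ ≤ 1 / 2 := by
        rw [norm_neg]; exact h1.trans h2
      have h3 := Complex.norm_log_one_add_half_le_self hhalf
      rw [← sub_eq_add_neg] at h3
      refine h3.trans ?_
      rw [norm_neg]
      exact mul_le_mul_of_nonneg_left h1 (by norm_num)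
    have hne0 : ∀ (p : ↥sᶜ) (w : ℂ), t ≤ w.re →
        1 - Complex.exp (-(w + (γ p.1 : ℂ))) ≠ 0 := by
      intro p w hw h
      have h1 := (hb p w hw).1.trans (hb p w hw).2
      rw [sub_eq_zero] at h
      rw [← h] at h1
      simp at h1
      linarith
    have hsummlog : ∀ w : ℂ, t ≤ w.re →
        Summable (fun p : ↥sᶜ => Complex.log (1 - Complex.exp (-(w + (γ p.1 : ℂ))))) :=
      fun w hw => Summable.of_norm_bounded hlogsum fun p => hlogbound p w hw
    refine ⟨s, hsfin, fun w hw => ?_, ?_⟩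
    · have h := ((hsummlog w hw).hasSum).cexp
      have heq : (fun p : ↥sᶜ => 1 - Complex.exp (-(w + (γ p.1 : ℂ)))) =
          fun p : ↥sᶜ => Complex.exp
            (Complex.log (1 - Complex.exp (-(w + (γ p.1 : ℂ))))) :=
        funext fun p => (Complex.exp_log (hne0 p w hw)).symm
      rw [heq]
      exact h
    · have hopen : IsOpen {w : ℂ | t < w.re} :=
        isOpen_lt continuous_const Complex.continuous_re
      have hUnif := tendstoUniformlyOn_tsum hlogsum
        (fun p w hw => hlogbound p w (le_of_lt hw))
      refine hUnif.tendstoLocallyUniformlyOn.differentiableOn ?_ hopen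
      filter_upwards with T
      intro w hw
      apply DifferentiableAt.differentiableWithinAt
      apply DifferentiableAt.fun_sum
      intro p _
      have hdiff : DifferentiableAt ℂ
          (fun w : ℂ => 1 - Complex.exp (-(w + (γ p.1 : ℂ)))) w :=
        (differentiableAt_const 1).sub
          (((differentiable_id.add_const _).neg.cexp) w)
      refine hdiff.clog ?_
      rw [Complex.mem_slitPlane_iff]
      left
      have h1 := (hb p w (le_of_lt hw)).1.trans (hb p w (le_of_lt hw)).2
      have h2 : (Complex.exp (-(w + (γ p.1 : ℂ)))).re ≤ 1 / 2 :=
        le_trans (Complex.re_le_norm _) h1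
      simp only [Complex.sub_re, Complex.one_re]
      linarith
  constructor
  · intro z
    have hsum : Summable (fun p : ι => Complex.exp (-(z + (γ p : ℂ)))) := by
      refine Summable.of_norm_bounded (Ssum.mul_left (Real.exp (-z.re))) fun p => ?_
      rw [hnorm, ← Real.exp_add]
      exact le_of_eq (by ring_nf)
    refine ⟨hsum, ?_⟩
    obtain ⟨s, hsfin, hHP, -⟩ := main z.re
    haveI := hsfin.to_subtype
    have h1 : Multipliable (fun p : ↥s => 1 - Complex.exp (-(z + (γ p.1 : ℂ)))) :=
      Multipliable.of_finite
    exact (HasProd.mul_compl (f := fun p : ι => 1 - Complex.exp (-(z + (γ p : ℂ))))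
      h1.hasProd (hHP z le_rfl)).multipliable
  · intro z
    obtain ⟨s, hsfin, hHP, hdiff⟩ := main (z.re - 1)
    have hopen : IsOpen {w : ℂ | z.re - 1 < w.re} :=
      isOpen_lt continuous_const Complex.continuous_re
    have hz : z ∈ {w : ℂ | z.re - 1 < w.re} := by
      simp only [Set.mem_setOf_eq]; linarith
    haveI := hsfin.fintype
    have hEq : Set.EqOn
        (fun w : ℂ => ∏' p : ι, (1 - Complex.exp (-(w + (γ p : ℂ)))))
        (fun w : ℂ => (∏ p : ↥s, (1 - Complex.exp (-(w + (γ p.1 : ℂ))))) *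
          Complex.exp (∑' p : ↥sᶜ,
            Complex.log (1 - Complex.exp (-(w + (γ p.1 : ℂ))))))
        {w : ℂ | z.re - 1 < w.re} := by
      intro w hw
      have h2 := hHP w (le_of_lt hw)
      have h1 : Multipliable ((fun p : ι => 1 - Complex.exp (-(w + (γ p : ℂ)))) ∘
          (Subtype.val : ↥s → ι)) := Multipliable.of_finite
      have h2' : Multipliable ((fun p : ι => 1 - Complex.exp (-(w + (γ p : ℂ)))) ∘
          (Subtype.val : ↥sᶜ → ι)) := h2.multipliable
      calc ∏' p : ι, (1 - Complex.exp (-(w + (γ p : ℂ))))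
          = (∏' p : ↥s, (1 - Complex.exp (-(w + (γ p.1 : ℂ))))) *
            ∏' p : ↥sᶜ, (1 - Complex.exp (-(w + (γ p.1 : ℂ)))) :=
            (Multipliable.tprod_mul_tprod_compl (f := fun p : ι => 1 - Complex.exp (-(w + (γ p : ℂ)))) h1 h2').symm
        _ = _ := by rw [h2.tprod_eq, tprod_fintype]
    have hdiffRHS : DifferentiableOn ℂ
        (fun w : ℂ => (∏ p : ↥s, (1 - Complex.exp (-(w + (γ p.1 : ℂ))))) *
          Complex.exp (∑' p : ↥sᶜ,
            Complex.log (1 - Complex.exp (-(w + (γ p.1 : ℂ))))))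
        {w : ℂ | z.re - 1 < w.re} := by
      refine DifferentiableOn.mul ?_ hdiff.cexp
      refine Differentiable.differentiableOn ?_
      refine Differentiable.fun_finset_prod fun p _ => ?_
      exact (differentiable_const 1).sub ((differentiable_id.add_const _).neg.cexp)
    exact (hdiffRHS.congr hEq).analyticAt (hopen.mem_nhds hz)

/-- The exponent `γ_{J,α} = Σ_{j∈J, j>r} |χ_j| + Σ_{j∉J, j≤r} |χ_j| + Σ_j α_j |χ_j|`
(indices `j ≤ r` in the 1-based numbering correspond to `(j : ℕ) < r` for `j : Fin n`). -/
def ruelleExponent (n r : ℕ) (χ : Fin n → ℝ) (J : Finset (Fin n)) (α : Fin n → ℕ) : ℝ :=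
  (∑ j ∈ J.filter (fun j : Fin n => r ≤ (j : ℕ)), |χ j|) +
    (∑ j ∈ (Finset.univ \ J).filter (fun j : Fin n => (j : ℕ) < r), |χ j|) +
    ∑ j, (α j : ℝ) * |χ j|

/-- With `L` real symmetric with nonzero eigenvalues
`χ₁ ≤ … ≤ χ_r < 0 < χ_{r+1} ≤ … ≤ χ_n`, for every `z ∈ ℂ` the family
`e^{−(z+γ_{J,α})}` indexed by pairs `(J,α)` with `|J| = k`, `α ∈ ℕⁿ` is summable, the
family `(1 − e^{−(z+γ_{J,α})})` is multipliable, and the resulting infinite product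
`F(z) = Π_{(J,α)} (1 − e^{−(z+γ_{J,α})})` is analytic on all of `ℂ`. -/
theorem ruelle_product_analytic (n : ℕ) (hn : 1 ≤ n) (k : ℕ) (hk : k ≤ n)
    (L : Matrix (Fin n) (Fin n) ℝ) (hL : L.IsSymm) (χ : Fin n → ℝ) (hmono : Monotone χ)
    (hchar : L.charpoly = ∏ j, (X - C (χ j)))
    (r : ℕ) (hr : ∀ j : Fin n, χ j < 0 ↔ (j : ℕ) < r) (hne : ∀ j, χ j ≠ 0) :
    (∀ z : ℂ,
      Summable (fun p : {J : Finset (Fin n) // J.card = k} × (Fin n → ℕ) =>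
        Complex.exp (-(z + (ruelleExponent n r χ p.1.1 p.2 : ℂ)))) ∧
      Multipliable (fun p : {J : Finset (Fin n) // J.card = k} × (Fin n → ℕ) =>
        1 - Complex.exp (-(z + (ruelleExponent n r χ p.1.1 p.2 : ℂ))))) ∧
    ∀ z : ℂ, AnalyticAt ℂ
      (fun w : ℂ => ∏' p : {J : Finset (Fin n) // J.card = k} × (Fin n → ℕ),
        (1 - Complex.exp (-(w + (ruelleExponent n r χ p.1.1 p.2 : ℂ))))) z := by
  classical
  haveI : Nonempty (Fin n) := ⟨⟨0, hn⟩⟩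
  have hne' : (Finset.univ : Finset (Fin n)).Nonempty := Finset.univ_nonempty
  set m := Finset.univ.inf' hne' (fun j => |χ j|) with hmdef
  have hm0 : 0 < m := (Finset.lt_inf'_iff hne').mpr fun j _ => abs_pos.mpr (hne j)
  have hγ_ge : ∀ (J : Finset (Fin n)) (α : Fin n → ℕ),
      m * (∑ j, (α j : ℝ)) ≤ ruelleExponent n r χ J α := by
    intro J α
    have h3 : m * (∑ j, (α j : ℝ)) ≤ ∑ j, (α j : ℝ) * |χ j| := by
      rw [Finset.mul_sum]
      refine Finset.sum_le_sum fun j _ => ?_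
      rw [mul_comm]
      exact mul_le_mul_of_nonneg_left (Finset.inf'_le _ (Finset.mem_univ j))
        (Nat.cast_nonneg _)
    have hA : (0:ℝ) ≤ ∑ j ∈ J.filter (fun j : Fin n => r ≤ (j : ℕ)), |χ j| :=
      Finset.sum_nonneg fun j _ => abs_nonneg _
    have hB : (0:ℝ) ≤ ∑ j ∈ (Finset.univ \ J).filter (fun j : Fin n => (j : ℕ) < r), |χ j| :=
      Finset.sum_nonneg fun j _ => abs_nonneg _
    unfold ruelleExponent
    linarith
  have hq1 : Real.exp (-m) < 1 := by
    rw [← Real.exp_zero]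
    exact Real.exp_lt_exp.mpr (by linarith)
  have hpi := summable_pow_sum_pi (Real.exp_pos (-m)).le hq1 n
  have hS1 : Summable (fun p : {J : Finset (Fin n) // J.card = k} × (Fin n → ℕ) =>
      Real.exp (-m) ^ (∑ j, p.2 j)) := by
    have h1 : Summable (fun _ : {J : Finset (Fin n) // J.card = k} => (1 : ℝ)) :=
      Summable.of_finite
    exact (h1.mul_of_nonneg hpi (fun _ => zero_le_one)
      (fun _ => pow_nonneg (Real.exp_pos _).le _)).congr fun p => one_mul _
  have hsum : Summable (fun p : {J : Finset (Fin n) // J.card = k} × (Fin n → ℕ) =>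
      Real.exp (-(ruelleExponent n r χ p.1.1 p.2))) := by
    refine hS1.of_nonneg_of_le (fun p => (Real.exp_pos _).le) fun p => ?_
    have h := hγ_ge p.1.1 p.2
    calc Real.exp (-(ruelleExponent n r χ p.1.1 p.2))
        ≤ Real.exp (-(m * ∑ j, (p.2 j : ℝ))) := Real.exp_le_exp.mpr (by linarith)
      _ = Real.exp (-m) ^ ∑ j, p.2 j := by
          rw [← Real.exp_nat_mul]
          congr 1
          push_cast
          ring
  have h := ruelle_aux (ι := {J : Finset (Fin n) // J.card = k} × (Fin n → ℕ))
    (fun p => ruelleExponent n r χ p.1.1 p.2) hsum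
  exact h
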